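/- There exists a POVM (M_{(x₀,x₁)})_{(x₀,x₁)∈{0,1}²} of 4×4 matrices such that for every (x₀,x₁) ∈ {0,1}²: Tr(M_{(x₀,x₁)} · F_{(x₀,x₁)}(|0,0⟩⟨0,0|)) ≥ 1/2. Equivalently, the four strong oblivious transfer channels can be discriminated, using the input state |0,0⟩, with maximal error probability at most 1/2. -/

import Mathlib

open Matrix Kronecker ComplexOrder

/-- The square root of a positive semidefinite matrix, as defined in Mathlib (Dec 2024). -/
noncomputable def Matrix.PosSemidef.sqrt {𝕜 : Type*} [RCLike 𝕜] {n : Type*} [Fintype n] [DecidableEq n]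
    {A : Matrix n n 𝕜} (hA : A.PosSemidef) : Matrix n n 𝕜 :=
  (hA.1.eigenvectorUnitary : Matrix n n 𝕜) * diagonal (((↑) : ℝ → 𝕜) ∘ (√·) ∘ hA.1.eigenvalues) *
    (star hA.1.eigenvectorUnitary : Matrix n n 𝕜)

/-- The trace norm `‖A‖₁ = Tr √(Aᴴ A)` of a complex matrix. -/
noncomputable def traceNorm {n : Type*} [Fintype n] [DecidableEq n] (A : Matrix n n ℂ) : ℝ :=
  ((Matrix.posSemidef_conjTranspose_mul_self A).sqrt.trace).re

/-- The trace distance `Δ(ρ,σ) = ‖ρ - σ‖₁ / 2`. -/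
noncomputable def traceDist {n : Type*} [Fintype n] [DecidableEq n] (ρ σ : Matrix n n ℂ) : ℝ :=
  traceNorm (ρ - σ) / 2

open scoped Classical in
/-- Positive semidefinite square root (junk value `0` on non-PSD matrices). -/
noncomputable def psdSqrt {n : Type*} [Fintype n] [DecidableEq n] (A : Matrix n n ℂ) :
    Matrix n n ℂ :=
  if h : A.PosSemidef then h.sqrt else 0

/-- The fidelity `F(ρ,σ) = ‖√ρ √σ‖₁`. -/
noncomputable def fidelity {n : Type*} [Fintype n] [DecidableEq n] (ρ σ : Matrix n n ℂ) : ℝ :=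
  traceNorm (psdSqrt ρ * psdSqrt σ)

/-- A density matrix: positive semidefinite with trace 1. -/
def IsDensityMatrix {n : Type*} [Fintype n] [DecidableEq n] (ρ : Matrix n n ℂ) : Prop :=
  ρ.PosSemidef ∧ ρ.trace = 1

/-- The projector `|b⟩⟨b|` on ℂ². -/
noncomputable def proj (b : Bool) : Matrix Bool Bool ℂ := Matrix.single b b 1

/-- The strong oblivious transfer channel `F_{(x₀,x₁)}`. -/
noncomputable def sotChannel (x₀ x₁ : Bool) (ρ : Matrix (Bool × Bool) (Bool × Bool) ℂ) :
    Matrix (Bool × Bool) (Bool × Bool) ℂ :=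
  ∑ i : Bool, ∑ i' : Bool,
    ρ (i, i') (i, i') •
      (((1/2 : ℂ) • (1 : Matrix Bool Bool ℂ)) ⊗ₖ proj (xor (bif xor i i' then x₁ else x₀) i'))

/-- The four strong oblivious transfer channels can be discriminated, using the
input state `|0,0⟩`, with maximal error probability at most `1/2`. -/
theorem stmt_15 :
    ∃ M : Bool × Bool → Matrix (Bool × Bool) (Bool × Bool) ℂ,
      (∀ x, (M x).PosSemidef) ∧ (∑ x : Bool × Bool, M x = 1) ∧
      ∀ x₀ x₁ : Bool,
        ((M (x₀, x₁) *
          sotChannel x₀ x₁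
            (Matrix.single (false, false) (false, false) 1)).trace).re ≥ 1/2 := by
  refine ⟨fun x => Matrix.diagonal (fun p => if p.2 = x.1 then (1/2 : ℂ) else 0), ?_, ?_, ?_⟩
  · intro x
    refine Matrix.posSemidef_diagonal_iff.2 fun p => ?_
    split <;> norm_num [Complex.le_def]
  · ext p q
    simp only [Finset.sum_apply, Matrix.diagonal_apply, Matrix.one_apply]
    fin_cases p <;> fin_cases q <;> simp [Fintype.sum_prod_type] <;> norm_num
  · intro x₀ x₁
    simp only [sotChannel, proj, Matrix.trace, Matrix.diag, Matrix.mul_apply,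
      Fintype.sum_prod_type, Fintype.sum_bool, Matrix.single, Matrix.diagonal_apply,
      Matrix.sum_apply, Matrix.smul_apply, Matrix.kroneckerMap_apply, Matrix.one_apply,
      Matrix.of_apply]
    cases x₀ <;> cases x₁ <;> norm_num
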